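/- Let f : ℝ^n → ℝ be continuous and bounded, let δ > 0 and t > 0, and define the viscous value function u^δ(x,t) = −δ ln( ∫_{ℝ^n} (4πt)^{−n/2} exp(−‖x − y‖²/(4t)) exp(−f(y)/δ) dy ). Then u^δ(·,t) is differentiable on ℝ^n, and its gradient is given by the Gaussian-expectation quotient ∇u^δ(x,t) = (δ/(2t)) · E_{y ∼ N(x, 2t·I)}[(x − y) exp(−f(y)/δ)] / E_{y ∼ N(x, 2t·I)}[exp(−f(y)/δ)], where N(x, 2t·I) denotes the Gaussian measure on ℝ^n with mean x and covariance 2t times the identity. -/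

import Mathlib

open Filter Topology MeasureTheory Real

/-- The viscous value function
`u^δ(x,t) = -δ ln( ∫ (4πt)^{-n/2} exp(-‖x-y‖²/(4t)) exp(-f(y)/δ) dy )`. -/
noncomputable def viscousEnv {n : ℕ} (f : EuclideanSpace ℝ (Fin n) → ℝ) (δ t : ℝ)
    (x : EuclideanSpace ℝ (Fin n)) : ℝ :=
  -δ * Real.log (∫ y : EuclideanSpace ℝ (Fin n),
    (4 * π * t) ^ (-(n : ℝ) / 2) * Real.exp (-‖x - y‖ ^ 2 / (4 * t)) *
      Real.exp (-f y / δ))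

/-- The density of the Gaussian distribution `N(x, 2t·I)` on `ℝ^n`, which coincides with
the heat kernel `Φ_t(x - ·)`. -/
noncomputable def gaussDensity {n : ℕ} (t : ℝ) (x y : EuclideanSpace ℝ (Fin n)) : ℝ :=
  (4 * π * t) ^ (-(n : ℝ) / 2) * Real.exp (-‖x - y‖ ^ 2 / (4 * t))

lemma integrable_gauss_aux {n : ℕ} {b : ℝ} (hb : 0 < b) (x : EuclideanSpace ℝ (Fin n)) :
    Integrable (fun y : EuclideanSpace ℝ (Fin n) => Real.exp (-‖x - y‖ ^ 2 / b)) := by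
  have h0 : Integrable (fun v : EuclideanSpace ℝ (Fin n) => Real.exp (-‖v‖ ^ 2 / b)) := by
    have h := (GaussianFourier.integrable_cexp_neg_mul_sq_norm_add (V := EuclideanSpace ℝ (Fin n))
      (b := (b⁻¹ : ℂ)) (by simpa using inv_pos.2 hb) 0 0).re
    refine h.congr (Filter.Eventually.of_forall fun v => ?_)
    have h1 : -(b⁻¹ : ℂ) * (‖v‖ : ℂ) ^ 2 + 0 * (inner ℝ (0 : EuclideanSpace ℝ (Fin n)) v : ℝ)
        = ((-‖v‖ ^ 2 / b : ℝ) : ℂ) := by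
      push_cast [zero_mul, add_zero]
      field_simp
    simp only [h1, RCLike.re_to_complex, Complex.exp_ofReal_re]
  have hmp := Measure.measurePreserving_sub_left (volume : Measure (EuclideanSpace ℝ (Fin n))) x
  have := (hmp.integrable_comp h0.aestronglyMeasurable).2 h0
  simpa [Function.comp_def] using this

lemma key_bound {t s r : ℝ} (ht : 0 < t) (hs : 0 ≤ s) (hr : 0 ≤ r)
    (h1 : s ≤ r + 1) (h2 : r ≤ s + 1) :
    s * Real.exp (-s ^ 2 / (4 * t)) ≤
      3 / 2 * (1 + 16 * t) * Real.exp (1 / (2 * t)) * Real.exp (-r ^ 2 / (16 * t)) := by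
  have hA : -s ^ 2 ≤ 2 * r - r ^ 2 := by
    rcases le_or_gt r 1 with h | h
    · nlinarith
    · nlinarith [mul_self_le_mul_self (by linarith : (0:ℝ) ≤ r - 1) (by linarith : r - 1 ≤ s)]
  have e1 : Real.exp (-s ^ 2 / (4 * t)) ≤ Real.exp ((2 * r - r ^ 2) / (4 * t)) := by
    apply Real.exp_le_exp.2
    gcongr
  have e2 : (2 * r - r ^ 2) / (4 * t) ≤ 1 / (2 * t) + -r ^ 2 / (8 * t) := by
    rw [div_add_div _ _ (by positivity) (by positivity),
      div_le_div_iff₀ (by positivity) (by positivity)]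
    nlinarith [sq_nonneg (r - 2), mul_pos ht ht, mul_nonneg (mul_pos ht ht).le (sq_nonneg (r - 2))]
  have e3 : (1 : ℝ) + r ^ 2 ≤ (1 + 16 * t) * Real.exp (r ^ 2 / (16 * t)) := by
    have e3a : (1 : ℝ) + r ^ 2 ≤ (1 + 16 * t) * (1 + r ^ 2 / (16 * t)) := by
      have hexp : (1 + 16 * t) * (1 + r ^ 2 / (16 * t))
          = 1 + 16 * t + r ^ 2 / (16 * t) + r ^ 2 := by
        field_simp
        ring
      rw [hexp]
      have h0 : 0 ≤ r ^ 2 / (16 * t) := by positivity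
      linarith
    refine e3a.trans ?_
    gcongr
    linarith [Real.add_one_le_exp (r ^ 2 / (16 * t))]
  calc s * Real.exp (-s ^ 2 / (4 * t))
      ≤ (r + 1) * Real.exp ((2 * r - r ^ 2) / (4 * t)) :=
        mul_le_mul h1 e1 (Real.exp_pos _).le (by linarith)
    _ ≤ (r + 1) * (Real.exp (1 / (2 * t)) * Real.exp (-r ^ 2 / (8 * t))) := by
        rw [← Real.exp_add]
        exact mul_le_mul_of_nonneg_left (Real.exp_le_exp.2 e2) (by linarith)
    _ ≤ (3 / 2 * (1 + r ^ 2)) * (Real.exp (1 / (2 * t)) * Real.exp (-r ^ 2 / (8 * t))) := by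
        apply mul_le_mul_of_nonneg_right _ (by positivity)
        nlinarith [sq_nonneg (r - 1)]
    _ ≤ (3 / 2 * ((1 + 16 * t) * Real.exp (r ^ 2 / (16 * t)))) *
          (Real.exp (1 / (2 * t)) * Real.exp (-r ^ 2 / (8 * t))) := by
        apply mul_le_mul_of_nonneg_right _ (by positivity)
        exact mul_le_mul_of_nonneg_left e3 (by norm_num)
    _ = 3 / 2 * (1 + 16 * t) * Real.exp (1 / (2 * t)) *
          (Real.exp (r ^ 2 / (16 * t)) * Real.exp (-r ^ 2 / (8 * t))) := by ring
    _ = 3 / 2 * (1 + 16 * t) * Real.exp (1 / (2 * t)) * Real.exp (-r ^ 2 / (16 * t)) := by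
        rw [← Real.exp_add]
        congr 1
        field_simp
        ring

set_option maxHeartbeats 1600000 in
set_option synthInstance.maxHeartbeats 1000000 in
theorem stmt_15 (n : ℕ) (f : EuclideanSpace ℝ (Fin n) → ℝ)
    (hf : Continuous f) (M : ℝ) (hbd : ∀ y, |f y| ≤ M)
    (δ t : ℝ) (hδ : 0 < δ) (ht : 0 < t) :
    ∀ x : EuclideanSpace ℝ (Fin n),
      HasGradientAt (viscousEnv f δ t)
        ((δ / (2 * t) /
            -- denominator: E_{y ∼ N(x,2tI)}[exp(-f(y)/δ)]
            (∫ y : EuclideanSpace ℝ (Fin n), gaussDensity t x y * Real.exp (-f y / δ))) •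
          -- numerator: E_{y ∼ N(x,2tI)}[(x - y) exp(-f(y)/δ)]
          (∫ y : EuclideanSpace ℝ (Fin n),
            (gaussDensity t x y * Real.exp (-f y / δ)) • (x - y)))
        x := by
  intro x
  have hπ := Real.pi_pos
  have h2t : (0:ℝ) < 2 * t := by positivity
  have hc0 : (0:ℝ) < (4 * π * t) ^ (-(n : ℝ) / 2) :=
    Real.rpow_pos_of_pos (by positivity) _
  set c := (4 * π * t) ^ (-(n : ℝ) / 2) with hcdef
  -- positivity of the integrand
  have hFpos : ∀ z y, 0 < gaussDensity t z y * Real.exp (-f y / δ) := by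
    intro z y
    unfold gaussDensity
    rw [← hcdef]
    positivity
  have hKle : ∀ y, Real.exp (-f y / δ) ≤ Real.exp (M / δ) := by
    intro y
    have h := (abs_le.1 (hbd y)).1
    exact Real.exp_le_exp.2 ((div_le_div_iff_of_pos_right hδ).2 (by linarith))
  -- continuity in y
  have hcont : ∀ z, Continuous (fun y => gaussDensity t z y * Real.exp (-f y / δ)) := by
    intro z
    unfold gaussDensity
    fun_prop
  -- integrability of the integrand
  have hFint : ∀ z, Integrable (fun y => gaussDensity t z y * Real.exp (-f y / δ)) := by
    intro z
    have hi := (integrable_gauss_aux (b := 4 * t) (by positivity) z).const_mul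
      (c * Real.exp (M / δ))
    refine hi.mono' (hcont z).aestronglyMeasurable
      (Filter.Eventually.of_forall fun y => ?_)
    rw [Real.norm_eq_abs, abs_of_pos (hFpos z y)]
    unfold gaussDensity
    rw [← hcdef]
    calc c * Real.exp (-‖z - y‖ ^ 2 / (4 * t)) * Real.exp (-f y / δ)
        ≤ c * Real.exp (-‖z - y‖ ^ 2 / (4 * t)) * Real.exp (M / δ) := by
          gcongr
          linarith [(abs_le.1 (hbd y)).1]
      _ = c * Real.exp (M / δ) * Real.exp (-‖z - y‖ ^ 2 / (4 * t)) := by ring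
  -- positivity of the denominator
  have hpos : ∀ z, 0 < ∫ y, gaussDensity t z y * Real.exp (-f y / δ) := by
    intro z
    rw [integral_pos_iff_support_of_nonneg (fun y => (hFpos z y).le) (hFint z)]
    have hsupp : Function.support (fun y => gaussDensity t z y * Real.exp (-f y / δ))
        = Set.univ := Set.eq_univ_of_forall fun y => (hFpos z y).ne'
    rw [hsupp]
    exact isOpen_univ.measure_pos volume ⟨z, trivial⟩
  -- the pointwise derivative
  set D : EuclideanSpace ℝ (Fin n) → EuclideanSpace ℝ (Fin n) →
      (EuclideanSpace ℝ (Fin n) →L[ℝ] ℝ) :=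
    fun z y => (gaussDensity t z y * Real.exp (-f y / δ) * (-(2 * t)⁻¹)) •
      (innerSL ℝ (z - y)) with hDdef
  have hderiv : ∀ y z, HasFDerivAt (fun w => gaussDensity t w y * Real.exp (-f y / δ))
      (D z y) z := by
    intro y z
    have h1 : HasFDerivAt (fun w : EuclideanSpace ℝ (Fin n) => ‖w - y‖ ^ 2)
        ((2 : ℕ) • (innerSL ℝ (z - y))) z := by
      simpa using ((hasFDerivAt_id z).sub_const y).norm_sq
    have h2 := h1.const_mul (-(4 * t)⁻¹)
    have h3 := h2.exp
    have h4 := (h3.const_mul c).mul_const (Real.exp (-f y / δ))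
    have hfun : (fun w => gaussDensity t w y * Real.exp (-f y / δ)) =
        (fun w => c * Real.exp (-(4 * t)⁻¹ * ‖w - y‖ ^ 2) * Real.exp (-f y / δ)) := by
      funext w
      unfold gaussDensity
      rw [← hcdef, show -‖w - y‖ ^ 2 / (4 * t) = -(4 * t)⁻¹ * ‖w - y‖ ^ 2 from by ring]
    rw [hfun]
    refine h4.congr_fderiv ?_
    ext v
    simp only [hDdef, ContinuousLinearMap.coe_smul', Pi.smul_apply, innerSL_apply_apply,
      smul_eq_mul, ContinuousLinearMap.smul_apply, innerSL_apply_apply, nsmul_eq_mul]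
    unfold gaussDensity
    rw [← hcdef, show -‖z - y‖ ^ 2 / (4 * t) = -(4 * t)⁻¹ * ‖z - y‖ ^ 2 from by ring]
    ring
  -- norm of the derivative
  have hDnorm : ∀ z y, ‖D z y‖ =
      gaussDensity t z y * Real.exp (-f y / δ) * (2 * t)⁻¹ * ‖z - y‖ := by
    intro z y
    rw [hDdef]
    rw [norm_smul (gaussDensity t z y * Real.exp (-f y / δ) * (-(2 * t)⁻¹))
        (innerSL ℝ (z - y)), innerSL_apply_norm, Real.norm_eq_abs, abs_mul,
      abs_of_pos (hFpos z y), abs_neg, abs_inv, abs_of_pos h2t]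
  -- the uniform bound
  set Bc := c * Real.exp (M / δ) * (2 * t)⁻¹ *
    (3 / 2 * (1 + 16 * t) * Real.exp (1 / (2 * t))) with hBcdef
  have h_bound : ∀ y, ∀ z ∈ Metric.ball x 1,
      ‖D z y‖ ≤ Bc * Real.exp (-‖x - y‖ ^ 2 / (16 * t)) := by
    intro y z hz
    have hzx : ‖z - x‖ < 1 := by rwa [mem_ball_iff_norm] at hz
    have hs1 : ‖z - y‖ ≤ ‖x - y‖ + 1 := by
      have h := norm_sub_le_norm_sub_add_norm_sub z x y
      linarith
    have hs2 : ‖x - y‖ ≤ ‖z - y‖ + 1 := by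
      have h := norm_sub_le_norm_sub_add_norm_sub x z y
      have h' : ‖x - z‖ = ‖z - x‖ := norm_sub_rev x z
      linarith
    have hkey := key_bound ht (norm_nonneg (z - y)) (norm_nonneg (x - y)) hs1 hs2
    rw [hDnorm]
    calc gaussDensity t z y * Real.exp (-f y / δ) * (2 * t)⁻¹ * ‖z - y‖
        ≤ (c * Real.exp (M / δ) * (2 * t)⁻¹) *
            (‖z - y‖ * Real.exp (-‖z - y‖ ^ 2 / (4 * t))) := by
          unfold gaussDensity
          rw [← hcdef]
          rw [show c * Real.exp (-‖z - y‖ ^ 2 / (4 * t)) * Real.exp (-f y / δ) * (2 * t)⁻¹ *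
                ‖z - y‖ = Real.exp (-f y / δ) *
                (c * Real.exp (-‖z - y‖ ^ 2 / (4 * t)) * (2 * t)⁻¹ * ‖z - y‖) from by ring,
            show c * Real.exp (M / δ) * (2 * t)⁻¹ *
                (‖z - y‖ * Real.exp (-‖z - y‖ ^ 2 / (4 * t))) = Real.exp (M / δ) *
                (c * Real.exp (-‖z - y‖ ^ 2 / (4 * t)) * (2 * t)⁻¹ * ‖z - y‖) from by ring]
          exact mul_le_mul_of_nonneg_right (hKle y) (by positivity)
      _ ≤ (c * Real.exp (M / δ) * (2 * t)⁻¹) *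
            (3 / 2 * (1 + 16 * t) * Real.exp (1 / (2 * t)) *
              Real.exp (-‖x - y‖ ^ 2 / (16 * t))) := by
          apply mul_le_mul_of_nonneg_left hkey
          positivity
      _ = Bc * Real.exp (-‖x - y‖ ^ 2 / (16 * t)) := by rw [hBcdef]; ring
  have hbint : Integrable (fun y => Bc * Real.exp (-‖x - y‖ ^ 2 / (16 * t))) :=
    (integrable_gauss_aux (b := 16 * t) (by positivity) x).const_mul Bc
  -- measurability of D x
  have hDmeas : AEStronglyMeasurable (D x) volume := by
    apply Continuous.aestronglyMeasurable
    simp only [hDdef]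
    apply Continuous.fun_smul
    · exact (hcont x).mul continuous_const
    · exact (innerSL ℝ).continuous.comp (continuous_const.sub continuous_id)
  -- differentiation under the integral sign
  have key : HasFDerivAt (fun z => ∫ y, gaussDensity t z y * Real.exp (-f y / δ))
      (∫ y, D x y) x :=
    hasFDerivAt_integral_of_dominated_of_fderiv_le (μ := volume) (Metric.ball_mem_nhds x one_pos)
      (Filter.Eventually.of_forall fun z => (hcont z).aestronglyMeasurable)
      (hFint x) hDmeas (Filter.Eventually.of_forall h_bound) hbint
      (Filter.Eventually.of_forall fun y z _ => hderiv y z)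
  -- the vector-valued integrand
  set W : EuclideanSpace ℝ (Fin n) → EuclideanSpace ℝ (Fin n) :=
    fun y => (gaussDensity t x y * Real.exp (-f y / δ) * (-(2 * t)⁻¹)) • (x - y) with hWdef
  have hWnorm : ∀ y, ‖W y‖ = ‖D x y‖ := by
    intro y
    rw [hDnorm, hWdef]
    rw [norm_smul (gaussDensity t x y * Real.exp (-f y / δ) * (-(2 * t)⁻¹)) (x - y),
      Real.norm_eq_abs, abs_mul, abs_of_pos (hFpos x y), abs_neg, abs_inv, abs_of_pos h2t]
  have hWint : Integrable W := by
    refine hbint.mono' ?_ (Filter.Eventually.of_forall fun y => ?_)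
    · apply Continuous.aestronglyMeasurable
      exact (((hcont x).mul continuous_const).smul (continuous_const.sub continuous_id))
    · rw [hWnorm]
      exact h_bound y x (Metric.mem_ball_self one_pos)
  have hcomm : (∫ y, D x y) = innerSL ℝ (∫ y, W y) := by
    rw [← ContinuousLinearMap.integral_comp_comm (innerSL ℝ) hWint]
    congr 1
    funext y
    simp only [hWdef, hDdef, _root_.map_smul]
  rw [hcomm] at key
  -- V, the numerator integrand
  set V : EuclideanSpace ℝ (Fin n) → EuclideanSpace ℝ (Fin n) :=
    fun y => (gaussDensity t x y * Real.exp (-f y / δ)) • (x - y) with hVdef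
  have hWV : ∀ y, W y = (-(2 * t)⁻¹) • V y := by
    intro y
    simp only [hWdef, hVdef, smul_smul]
    congr 1
    ring
  have hintWV : (∫ y, W y) = (-(2 * t)⁻¹) • ∫ y, V y := by
    rw [← integral_smul]
    exact integral_congr_ae (Filter.Eventually.of_forall hWV)
  -- compose with log and multiply by -δ
  set gx := ∫ y, gaussDensity t x y * Real.exp (-f y / δ) with hgxdef
  have hlog := (Real.hasDerivAt_log (hpos x).ne').comp_hasFDerivAt x key
  have hfinal := hlog.const_mul (-δ)
  rw [hasGradientAt_iff_hasFDerivAt]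
  have hvisc : viscousEnv f δ t =
      fun z => -δ * Real.log (∫ y, gaussDensity t z y * Real.exp (-f y / δ)) := rfl
  rw [hvisc]
  refine hfinal.congr_fderiv ?_
  apply ContinuousLinearMap.ext
  intro v
  rw [hintWV]
  simp only [InnerProductSpace.toDual_apply_apply, ContinuousLinearMap.smul_apply, innerSL_apply_apply,
    real_inner_smul_left, smul_eq_mul, _root_.map_smul]
  ring
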